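/- Let N be a positive integer, let M and Θ be real orthogonal 3×3 matrices, let λ₁, λ₂, λ₃ ∈ [−1,1], and let A = diag(λ₁, λ₂, λ₃). Set X = Mᵀ·A·Θ (so all entries of X lie in [−1,1]). Let (x̂_{ij})_{i,j∈{1,2,3}} be independent real random variables with E[x̂_{ij}] = X_{ij} and Var(x̂_{ij}) = (1 − X_{ij}²)/N, and define the random matrix Â = M·X̂·Θᵀ and its symmetrization Â_s = (Â + Âᵀ)/2. Then the mean squared Frobenius error satisfies E[‖Â_s − A‖²] ≥ (1/N)·(6 − (λ₁² + λ₂² + λ₃²)), where ‖B‖² = Σ_{i,j} B_{ij}² is the squared Hilbert–Schmidt norm. (Theorem 3, lower bound.) -/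

import Mathlib

open MeasureTheory ProbabilityTheory Matrix

private lemma aux_integral_sq {Ω : Type*} [MeasurableSpace Ω] (μ : Measure Ω)
    [IsProbabilityMeasure μ]
    (xhat : Fin 3 → Fin 3 → Ω → ℝ)
    (hL2 : ∀ i j, MemLp (xhat i j) 2 μ)
    (hindep : iIndepFun
      (fun p : Fin 3 × Fin 3 => xhat p.1 p.2) μ)
    (w : Fin 3 × Fin 3 → ℝ) :
    ∫ ω, ((∑ p : Fin 3 × Fin 3, w p * xhat p.1 p.2 ω)
        - ∑ p : Fin 3 × Fin 3, w p * (∫ ω', xhat p.1 p.2 ω' ∂μ)) ^ 2 ∂μ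
      = ∑ p : Fin 3 × Fin 3, w p ^ 2 * variance (xhat p.1 p.2) μ := by
  set Y : Fin 3 × Fin 3 → Ω → ℝ := fun p ω => w p * xhat p.1 p.2 ω with hY
  have hYL2 : ∀ p : Fin 3 × Fin 3, MemLp (Y p) 2 μ := fun p => (hL2 p.1 p.2).const_mul _
  set T : Ω → ℝ := fun ω => ∑ p : Fin 3 × Fin 3, Y p ω with hT
  have hTL2 : MemLp T 2 μ := memLp_finset_sum _ (fun p _ => hYL2 p)
  have hET : ∫ ω, T ω ∂μ = ∑ p : Fin 3 × Fin 3, w p * (∫ ω', xhat p.1 p.2 ω' ∂μ) := by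
    rw [hT]
    rw [integral_finset_sum _ (fun p _ => ((hL2 p.1 p.2).integrable one_le_two).const_mul _)]
    exact Finset.sum_congr rfl fun p _ => integral_const_mul _ _
  have hvarT : variance T μ = ∑ p : Fin 3 × Fin 3, w p ^ 2 * variance (xhat p.1 p.2) μ := by
    have hpair : Set.Pairwise ↑(Finset.univ : Finset (Fin 3 × Fin 3))
        fun p q => IndepFun (Y p) (Y q) μ := by
      intro p _ q _ hpq
      exact (hindep.indepFun hpq).comp (measurable_const_mul (w p)) (measurable_const_mul (w q))
    have hsum := IndepFun.variance_sum (μ := μ) (X := Y) (s := Finset.univ)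
      (fun p _ => hYL2 p) hpair
    have hTeq : T = ∑ p : Fin 3 × Fin 3, Y p := by funext ω; simp [hT]
    rw [hTeq, hsum]
    exact Finset.sum_congr rfl fun p _ => variance_const_mul (w p) (xhat p.1 p.2) μ
  rw [← hET, ← hvarT, variance_eq_integral hTL2.aestronglyMeasurable.aemeasurable]

/-- Theorem 3, lower bound: with `M, Θ` orthogonal,
`A = diag(λ₁,λ₂,λ₃)` (`λᵢ ∈ [-1,1]`), `X = Mᵀ·A·Θ`, independent square-integrable
estimators `x̂_{ij}` with mean `X_{ij}` and variance `(1 - X_{ij}²)/N`,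
`Â = M·X̂·Θᵀ` and `Â_s = (Â + Âᵀ)/2`, the mean squared Frobenius error of the
symmetrized estimator satisfies
`E[‖Â_s - A‖²] ≥ (1/N)(6 - (λ₁² + λ₂² + λ₃²))`. -/
theorem channel_matrix_mse_lower_bound {Ω : Type*} [MeasurableSpace Ω]
    (μ : Measure Ω) [IsProbabilityMeasure μ]
    (N : ℕ) (hN : 0 < N)
    (M Θ : Matrix (Fin 3) (Fin 3) ℝ) (hM : Mᵀ * M = 1) (hΘ : Θᵀ * Θ = 1)
    (l₁ l₂ l₃ : ℝ) (hl₁ : l₁ ∈ Set.Icc (-1 : ℝ) 1) (hl₂ : l₂ ∈ Set.Icc (-1 : ℝ) 1)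
    (hl₃ : l₃ ∈ Set.Icc (-1 : ℝ) 1)
    (A X : Matrix (Fin 3) (Fin 3) ℝ)
    (hA : A = Matrix.diagonal ![l₁, l₂, l₃]) (hX : X = Mᵀ * A * Θ)
    (xhat : Fin 3 → Fin 3 → Ω → ℝ)
    (hmeas : ∀ i j, Measurable (xhat i j))
    (hL2 : ∀ i j, MemLp (xhat i j) 2 μ)
    (hindep : iIndepFun
      (fun p : Fin 3 × Fin 3 => xhat p.1 p.2) μ)
    (hmean : ∀ i j, (∫ ω, xhat i j ω ∂μ) = X i j)
    (hvar : ∀ i j, variance (xhat i j) μ = (1 - X i j ^ 2) / N)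
    (Ahat : Ω → Matrix (Fin 3) (Fin 3) ℝ)
    (hAhat : ∀ ω, Ahat ω = M * Matrix.of (fun i j => xhat i j ω) * Θᵀ) :
    (1 / N) * (6 - (l₁ ^ 2 + l₂ ^ 2 + l₃ ^ 2))
      ≤ ∫ ω, ∑ i, ∑ j, (((1 / 2 : ℝ) • (Ahat ω + (Ahat ω)ᵀ)) i j - A i j) ^ 2 ∂μ := by
  have hNpos : (0 : ℝ) < N := by exact_mod_cast hN
  have hMM : M * Mᵀ = 1 := mul_eq_one_comm.mp hM
  have hΘΘ : Θ * Θᵀ = 1 := mul_eq_one_comm.mp hΘ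
  -- M X Θᵀ = A
  have hMXA : M * X * Θᵀ = A := by
    rw [hX]
    simp only [Matrix.mul_assoc]
    rw [hΘΘ, Matrix.mul_one, ← Matrix.mul_assoc, hMM, Matrix.one_mul]
  -- entrywise formula for conjugations
  have hentry : ∀ (Y : Matrix (Fin 3) (Fin 3) ℝ) (a b : Fin 3),
      (M * Y * Θᵀ) a b = ∑ p : Fin 3 × Fin 3, M a p.1 * Y p.1 p.2 * Θ b p.2 := by
    intro Y a b
    simp only [Matrix.mul_apply, Matrix.transpose_apply, Fintype.sum_prod_type,
      Fin.sum_univ_three]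
    ring
  -- A is symmetric
  have hsymm : ∀ a b : Fin 3, A b a = A a b := by
    intro a b
    rcases eq_or_ne a b with rfl | h
    · rfl
    · rw [hA, Matrix.diagonal_apply_ne _ (Ne.symm h), Matrix.diagonal_apply_ne _ h]
  -- the weights
  set w : Fin 3 → Fin 3 → Fin 3 × Fin 3 → ℝ :=
    fun a b p => (M a p.1 * Θ b p.2 + M b p.1 * Θ a p.2) / 2 with hw
  have hAab : ∀ a b : Fin 3, A a b = ∑ p : Fin 3 × Fin 3, w a b p * X p.1 p.2 := by
    intro a b
    have h0 : A a b = ((M * X * Θᵀ) a b + (M * X * Θᵀ) b a) / 2 := by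
      rw [hMXA, hsymm a b]; ring
    rw [h0, hentry X a b, hentry X b a, ← Finset.sum_add_distrib, Finset.sum_div]
    exact Finset.sum_congr rfl fun p _ => by simp only [hw]; ring
  -- pointwise representation of the error entries
  have hrep : ∀ a b : Fin 3,
      (fun ω => (((1 / 2 : ℝ) • (Ahat ω + (Ahat ω)ᵀ)) a b - A a b) ^ 2)
        = fun ω => ((∑ p : Fin 3 × Fin 3, w a b p * xhat p.1 p.2 ω)
            - ∑ p : Fin 3 × Fin 3, w a b p * X p.1 p.2) ^ 2 := by
    intro a b
    funext ω
    congr 1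
    rw [hAhat ω]
    simp only [Matrix.smul_apply, Matrix.add_apply, Matrix.transpose_apply, smul_eq_mul]
    rw [hentry _ a b, hentry _ b a, hAab a b]
    congr 1
    rw [← Finset.sum_add_distrib, Finset.mul_sum]
    exact Finset.sum_congr rfl fun p _ => by simp only [hw, Matrix.of_apply]; ring
  -- integrability of each entry
  have hInt : ∀ a b : Fin 3,
      Integrable (fun ω => (((1 / 2 : ℝ) • (Ahat ω + (Ahat ω)ᵀ)) a b - A a b) ^ 2) μ := by
    intro a b
    rw [hrep a b]
    have hTL2 : MemLp (fun ω => ∑ p : Fin 3 × Fin 3, w a b p * xhat p.1 p.2 ω) 2 μ :=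
      memLp_finset_sum _ fun p _ => (hL2 p.1 p.2).const_mul _
    exact (hTL2.sub (memLp_const _)).integrable_sq
  -- value of each entry integral
  have hVal : ∀ a b : Fin 3,
      ∫ ω, (((1 / 2 : ℝ) • (Ahat ω + (Ahat ω)ᵀ)) a b - A a b) ^ 2 ∂μ
        = ∑ p : Fin 3 × Fin 3, (w a b p) ^ 2 * ((1 - X p.1 p.2 ^ 2) / N) := by
    intro a b
    rw [hrep a b]
    have h := aux_integral_sq μ xhat hL2 hindep (w a b)
    simp only [hmean] at h
    rw [h]
    exact Finset.sum_congr rfl fun p _ => by rw [hvar]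
  -- swap integral and sums
  have hswap : ∫ ω, ∑ i, ∑ j, (((1 / 2 : ℝ) • (Ahat ω + (Ahat ω)ᵀ)) i j - A i j) ^ 2 ∂μ
      = ∑ i, ∑ j, ∫ ω, (((1 / 2 : ℝ) • (Ahat ω + (Ahat ω)ᵀ)) i j - A i j) ^ 2 ∂μ := by
    rw [integral_finset_sum _ fun i _ => integrable_finset_sum _ fun j _ => hInt i j]
    exact Finset.sum_congr rfl fun i _ => integral_finset_sum _ fun j _ => hInt i j
  rw [hswap]
  -- orthogonality column identities
  have hMcol : ∀ i, ∑ a, M a i ^ 2 = 1 := by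
    intro i
    have h := congrFun (congrFun hM i) i
    simpa [Matrix.mul_apply, Matrix.one_apply_eq, pow_two] using h
  have hΘcol : ∀ j, ∑ a, Θ a j ^ 2 = 1 := by
    intro j
    have h := congrFun (congrFun hΘ j) j
    simpa [Matrix.mul_apply, Matrix.one_apply_eq, pow_two] using h
  set C : Matrix (Fin 3) (Fin 3) ℝ := Mᵀ * Θ with hC
  have hCtC : Cᵀ * C = 1 := by
    rw [hC]
    simp only [Matrix.transpose_mul, Matrix.transpose_transpose, Matrix.mul_assoc]
    rw [← Matrix.mul_assoc M Mᵀ Θ, hMM, Matrix.one_mul]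
    exact hΘ
  have hCcol : ∀ j, ∑ a, C a j ^ 2 = 1 := by
    intro j
    have h := congrFun (congrFun hCtC j) j
    simpa [Matrix.mul_apply, Matrix.one_apply_eq, pow_two] using h
  have hc_le : ∀ p : Fin 3 × Fin 3, (C p.1 p.2) ^ 2 ≤ 1 := by
    intro p
    calc (C p.1 p.2) ^ 2 ≤ ∑ a, C a p.2 ^ 2 :=
          Finset.single_le_sum (f := fun a => C a p.2 ^ 2)
            (fun a _ => sq_nonneg _) (Finset.mem_univ p.1)
      _ = 1 := hCcol p.2
  have hsumc : ∑ p : Fin 3 × Fin 3, (C p.1 p.2) ^ 2 = 3 := by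
    rw [Fintype.sum_prod_type, Finset.sum_comm]
    simp [hCcol]
  -- sum of squares of X
  have hXXt : X * Xᵀ = Mᵀ * (A * (Aᵀ * M)) := by
    rw [hX]
    simp only [Matrix.transpose_mul, Matrix.transpose_transpose, Matrix.mul_assoc]
    rw [← Matrix.mul_assoc Θ Θᵀ, hΘΘ, Matrix.one_mul]
  have hXsq : ∑ p : Fin 3 × Fin 3, (X p.1 p.2) ^ 2 = l₁ ^ 2 + l₂ ^ 2 + l₃ ^ 2 := by
    have htr1 : ∑ p : Fin 3 × Fin 3, (X p.1 p.2) ^ 2 = Matrix.trace (X * Xᵀ) := by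
      simp [Matrix.trace, Matrix.diag, Matrix.mul_apply, Fintype.sum_prod_type, pow_two]
    rw [htr1, hXXt, Matrix.trace_mul_comm]
    simp only [Matrix.mul_assoc]
    rw [hMM, Matrix.mul_one, hA]
    simp [Matrix.diagonal_transpose, Matrix.diagonal_mul_diagonal, Matrix.trace_diagonal,
      Fin.sum_univ_three]
    ring
  -- weight sums
  have hw2 : ∀ p : Fin 3 × Fin 3, ∑ a, ∑ b, (w a b p) ^ 2 = (1 + (C p.1 p.2) ^ 2) / 2 := by
    intro p
    have h1 : ∑ a, ∑ b, (w a b p) ^ 2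
        = ((∑ a, M a p.1 ^ 2) * (∑ b, Θ b p.2 ^ 2)
            + (∑ a, M a p.1 * Θ a p.2) ^ 2) / 2 := by
      simp only [hw, Fin.sum_univ_three]
      ring
    have h2 : C p.1 p.2 = ∑ a, M a p.1 * Θ a p.2 := by
      simp [hC, Matrix.mul_apply, Matrix.transpose_apply]
    rw [h1, hMcol, hΘcol, h2]
    ring
  -- reorganize the triple sum
  have hreorg : ∑ i, ∑ j, ∫ ω, (((1 / 2 : ℝ) • (Ahat ω + (Ahat ω)ᵀ)) i j - A i j) ^ 2 ∂μ
      = ∑ p : Fin 3 × Fin 3, ((1 + (C p.1 p.2) ^ 2) / 2) * ((1 - X p.1 p.2 ^ 2) / N) := by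
    calc ∑ i, ∑ j, ∫ ω, (((1 / 2 : ℝ) • (Ahat ω + (Ahat ω)ᵀ)) i j - A i j) ^ 2 ∂μ
        = ∑ i, ∑ j, ∑ p : Fin 3 × Fin 3, (w i j p) ^ 2 * ((1 - X p.1 p.2 ^ 2) / N) :=
          Finset.sum_congr rfl fun i _ => Finset.sum_congr rfl fun j _ => hVal i j
      _ = ∑ i, ∑ p : Fin 3 × Fin 3, ∑ j, (w i j p) ^ 2 * ((1 - X p.1 p.2 ^ 2) / N) :=
          Finset.sum_congr rfl fun i _ => Finset.sum_comm
      _ = ∑ p : Fin 3 × Fin 3, ∑ i, ∑ j, (w i j p) ^ 2 * ((1 - X p.1 p.2 ^ 2) / N) :=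
          Finset.sum_comm
      _ = ∑ p : Fin 3 × Fin 3, (∑ i, ∑ j, (w i j p) ^ 2) * ((1 - X p.1 p.2 ^ 2) / N) := by
          refine Finset.sum_congr rfl fun p _ => ?_
          rw [Finset.sum_mul]
          exact Finset.sum_congr rfl fun i _ => by rw [Finset.sum_mul]
      _ = ∑ p : Fin 3 × Fin 3, ((1 + (C p.1 p.2) ^ 2) / 2) * ((1 - X p.1 p.2 ^ 2) / N) :=
          Finset.sum_congr rfl fun p _ => by rw [hw2 p]
  rw [hreorg]
  -- final computation
  have hexp : ∑ p : Fin 3 × Fin 3, ((1 + (C p.1 p.2) ^ 2) / 2) * ((1 - X p.1 p.2 ^ 2) / N)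
      = (9 + (∑ p : Fin 3 × Fin 3, (C p.1 p.2) ^ 2)
          - (∑ p : Fin 3 × Fin 3, (X p.1 p.2) ^ 2)
          - ∑ p : Fin 3 × Fin 3, (X p.1 p.2) ^ 2 * (C p.1 p.2) ^ 2) / (2 * (N:ℝ)) := by
    calc ∑ p : Fin 3 × Fin 3, ((1 + (C p.1 p.2) ^ 2) / 2) * ((1 - X p.1 p.2 ^ 2) / N)
        = ∑ p : Fin 3 × Fin 3,
            (1 + (C p.1 p.2) ^ 2 - X p.1 p.2 ^ 2 - X p.1 p.2 ^ 2 * (C p.1 p.2) ^ 2)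
              / (2 * (N:ℝ)) := by
          refine Finset.sum_congr rfl fun p _ => ?_
          field_simp
          ring
      _ = (∑ p : Fin 3 × Fin 3,
            (1 + (C p.1 p.2) ^ 2 - X p.1 p.2 ^ 2 - X p.1 p.2 ^ 2 * (C p.1 p.2) ^ 2))
              / (2 * (N:ℝ)) := by rw [Finset.sum_div]
      _ = _ := by
          rw [Finset.sum_sub_distrib, Finset.sum_sub_distrib, Finset.sum_add_distrib]
          simp
  rw [hexp, hsumc, hXsq]
  have ht : ∑ p : Fin 3 × Fin 3, (X p.1 p.2) ^ 2 * (C p.1 p.2) ^ 2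
      ≤ l₁ ^ 2 + l₂ ^ 2 + l₃ ^ 2 := by
    rw [← hXsq]
    exact Finset.sum_le_sum fun p _ => mul_le_of_le_one_right (sq_nonneg _) (hc_le p)
  have hlhs : (1 / (N : ℝ)) * (6 - (l₁ ^ 2 + l₂ ^ 2 + l₃ ^ 2))
      = (12 - 2 * (l₁ ^ 2 + l₂ ^ 2 + l₃ ^ 2)) / (2 * (N:ℝ)) := by
    field_simp
    ring
  rw [hlhs, div_le_div_iff₀ (by positivity) (by positivity)]
  nlinarith [ht, hNpos]
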